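/- Let A, B > 0. Then lim_{q→1⁻} (ℓ q^A; q)_∞ / (ℓ q^B; q)_∞ = (1-ℓ)^{B-A}, uniformly for ℓ in any compact subset of (0,1). -/

import Mathlib

set_option maxHeartbeats 1000000

/-- The infinite q-Pochhammer symbol `(x;q)_∞ = ∏_{k=0}^{∞} (1 - x q^k)`. -/
noncomputable def qPochInf (x q : ℝ) : ℝ :=
  ∏' k : ℕ, (1 - x * q ^ k)

open Real Filter Set Topology


lemma log_sub_log_le {x y : ℝ} (hx : 0 < x) (hy : 0 < y) :
    Real.log x - Real.log y ≤ (x - y) / y := by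
  have h := Real.log_le_sub_one_of_pos (show 0 < x / y by positivity)
  rw [Real.log_div hx.ne' hy.ne'] at h
  calc Real.log x - Real.log y ≤ x / y - 1 := h
    _ = (x - y) / y := by field_simp

lemma abs_log_sub_log_le {a b : ℝ} (ha : 0 < a) (hb : 0 < b) :
    |Real.log a - Real.log b| ≤ |a - b| / min a b := by
  have hmin : 0 < min a b := lt_min ha hb
  rw [abs_sub_le_iff]
  constructor
  · calc Real.log a - Real.log b ≤ (a - b) / b := log_sub_log_le ha hb
      _ ≤ |a - b| / b := by
          apply div_le_div_of_nonneg_right ?_ hb.le -- maybe wrong name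
          exact le_abs_self _
      _ ≤ |a - b| / min a b :=
          div_le_div_of_nonneg_left (abs_nonneg _) hmin (min_le_right a b)
  · calc Real.log b - Real.log a ≤ (b - a) / a := log_sub_log_le hb ha
      _ ≤ |a - b| / a := by
          apply div_le_div_of_nonneg_right ?_ ha.le
          rw [abs_sub_comm]; exact le_abs_self _
      _ ≤ |a - b| / min a b :=
          div_le_div_of_nonneg_left (abs_nonneg _) hmin (min_le_left a b)

lemma factor_pos {x q : ℝ} (hq0 : 0 < q) (hq1 : q < 1) (hx0 : 0 ≤ x) (hx1 : x < 1) (k : ℕ) :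
    0 < 1 - x * q ^ k := by
  have h1 : q ^ k ≤ 1 := pow_le_one₀ hq0.le hq1.le
  nlinarith [pow_pos hq0 k]

lemma summable_log_factor {x q : ℝ} (hq0 : 0 < q) (hq1 : q < 1) (hx0 : 0 ≤ x) (hx1 : x < 1) :
    Summable (fun k : ℕ => Real.log (1 - x * q ^ k)) := by
  rw [← summable_neg_iff]
  have hg : Summable (fun k : ℕ => (x / (1 - x)) * q ^ k) :=
    (summable_geometric_of_lt_one hq0.le hq1).mul_left _
  refine Summable.of_nonneg_of_le ?_ ?_ hg
  · intro k
    rw [neg_nonneg]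
    apply Real.log_nonpos (factor_pos hq0 hq1 hx0 hx1 k).le
    nlinarith [pow_pos hq0 k, pow_le_one₀ hq0.le hq1.le (n := k)]
  · intro k
    have hpos := factor_pos hq0 hq1 hx0 hx1 k
    have h1 : q ^ k ≤ 1 := pow_le_one₀ hq0.le hq1.le
    have hlog : Real.log ((1 - x * q ^ k)⁻¹) ≤ (1 - x * q ^ k)⁻¹ - 1 :=
      Real.log_le_sub_one_of_pos (by positivity)
    rw [Real.log_inv] at hlog
    have heq : (1 - x * q ^ k)⁻¹ - 1 = x * q ^ k / (1 - x * q ^ k) := by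
      field_simp
      ring
    rw [heq] at hlog
    calc -Real.log (1 - x * q ^ k) ≤ x * q ^ k / (1 - x * q ^ k) := hlog
      _ ≤ x * q ^ k / (1 - x) := by
          apply div_le_div_of_nonneg_left (by positivity) (by linarith) ?_
          nlinarith [pow_pos hq0 k]
      _ = (x / (1 - x)) * q ^ k := by ring

lemma qPochInf_eq_exp {x q : ℝ} (hq0 : 0 < q) (hq1 : q < 1) (hx0 : 0 ≤ x) (hx1 : x < 1) :
    (∏' k : ℕ, (1 - x * q ^ k)) = Real.exp (∑' k : ℕ, Real.log (1 - x * q ^ k)) := by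
  have hs := (summable_log_factor hq0 hq1 hx0 hx1).hasSum
  have hp := hs.rexp
  have : (Real.exp ∘ fun k : ℕ => Real.log (1 - x * q ^ k)) = fun k : ℕ => 1 - x * q ^ k := by
    funext k
    exact Real.exp_log (factor_pos hq0 hq1 hx0 hx1 k)
  rw [this] at hp
  exact hp.tprod_eq

lemma concave_logq {q ℓ : ℝ} (hq0 : 0 < q) (hq1 : q < 1) (hℓ0 : 0 < ℓ) (τ : ℝ)
    (hτ : ℓ * q ^ τ < 1) :
    ConcaveOn ℝ (Set.Ici τ) (fun t : ℝ => Real.log (1 - ℓ * q ^ t)) := by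
  set L := Real.log q with hL
  have hLneg : L < 0 := Real.log_neg hq0 hq1
  have funeq : (fun t : ℝ => Real.log (1 - ℓ * q ^ t))
      = fun t : ℝ => Real.log (1 - ℓ * Real.exp (L * t)) := by
    funext t; rw [Real.rpow_def_of_pos hq0]
  have hupos : ∀ t : ℝ, 0 < ℓ * Real.exp (L * t) := fun t => by positivity
  have hult : ∀ t : ℝ, τ ≤ t → ℓ * Real.exp (L * t) < 1 := by
    intro t ht
    have : Real.exp (L * t) ≤ Real.exp (L * τ) :=
      Real.exp_le_exp.mpr (by nlinarith)
    have hτ' : ℓ * Real.exp (L * τ) < 1 := by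
      rwa [← Real.rpow_def_of_pos hq0]
    nlinarith
  have hder : ∀ t : ℝ, τ ≤ t →
      HasDerivAt (fun t : ℝ => Real.log (1 - ℓ * Real.exp (L * t)))
        (-(ℓ * (L * Real.exp (L * t))) / (1 - ℓ * Real.exp (L * t))) t := by
    intro t ht
    have h1 : HasDerivAt (fun t : ℝ => L * t) L t := by
      simpa using (hasDerivAt_id t).const_mul L
    have h2 : HasDerivAt (fun t : ℝ => Real.exp (L * t)) (Real.exp (L * t) * L) t := h1.exp
    have h3 : HasDerivAt (fun t : ℝ => 1 - ℓ * Real.exp (L * t))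
        (-(ℓ * (Real.exp (L * t) * L))) t := (h2.const_mul ℓ).const_sub 1
    have h4 := h3.log (by have := hult t ht; have := hupos t; linarith)
    convert h4 using 1
    ring
  rw [funeq]
  apply AntitoneOn.concaveOn_of_deriv (convex_Ici τ)
  · intro t ht
    exact (hder t ht).continuousAt.continuousWithinAt
  · rw [interior_Ici]
    intro t ht
    exact (hder t (le_of_lt ht)).differentiableAt.differentiableWithinAt
  · rw [interior_Ici]
    intro s hs t ht hst
    rw [(hder s (le_of_lt hs)).deriv, (hder t (le_of_lt ht)).deriv]
    have h1 : 0 < ℓ * Real.exp (L * s) := hupos s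
    have h2 : 0 < ℓ * Real.exp (L * t) := hupos t
    have h3 : ℓ * Real.exp (L * s) < 1 := hult s (le_of_lt hs)
    have h4 : ℓ * Real.exp (L * t) < 1 := hult t (le_of_lt ht)
    have h5 : ℓ * Real.exp (L * t) ≤ ℓ * Real.exp (L * s) := by
      have : Real.exp (L * t) ≤ Real.exp (L * s) := Real.exp_le_exp.mpr (by nlinarith)
      nlinarith
    rw [div_le_div_iff₀ (by linarith) (by linarith)]
    nlinarith

lemma rpow_factor_lt_one {q ℓ : ℝ} (hq0 : 0 < q) (hq1 : q < 1) (hℓ0 : 0 < ℓ) {c : ℝ}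
    (hc : ℓ * q ^ c < 1) {t : ℝ} (ht : c ≤ t) : ℓ * q ^ t < 1 := by
  have : q ^ t ≤ q ^ c := Real.rpow_le_rpow_of_exponent_ge hq0 hq1.le ht
  nlinarith [Real.rpow_pos_of_pos hq0 t]

lemma hasSum_tele {q ℓ : ℝ} (hq0 : 0 < q) (hq1 : q < 1) (hℓ0 : 0 < ℓ) (hℓ1 : ℓ < 1) (c : ℝ)
    (hc : ℓ * q ^ c < 1) :
    HasSum (fun k : ℕ =>
        Real.log (1 - ℓ * q ^ (c + (k : ℝ) + 1)) - Real.log (1 - ℓ * q ^ (c + (k : ℝ))))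
      (-Real.log (1 - ℓ * q ^ c)) := by
  set g : ℕ → ℝ := fun n => Real.log (1 - ℓ * q ^ (c + (n : ℝ))) with hg
  have hlt : ∀ t : ℝ, c ≤ t → ℓ * q ^ t < 1 := fun t ht =>
    rpow_factor_lt_one hq0 hq1 hℓ0 hc ht
  have hpos : ∀ t : ℝ, c ≤ t → 0 < 1 - ℓ * q ^ t := fun t ht => by
    have := hlt t ht; linarith
  have hnonneg : ∀ k : ℕ, 0 ≤ Real.log (1 - ℓ * q ^ (c + (k : ℝ) + 1))
      - Real.log (1 - ℓ * q ^ (c + (k : ℝ))) := by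
    intro k
    have h1 : q ^ (c + (k : ℝ) + 1) ≤ q ^ (c + (k : ℝ)) :=
      Real.rpow_le_rpow_of_exponent_ge hq0 hq1.le (by linarith)
    have h2 := hpos (c + (k : ℝ)) (le_add_of_nonneg_right (Nat.cast_nonneg k))
    have h3 : (0:ℝ) < ℓ := hℓ0
    have : Real.log (1 - ℓ * q ^ (c + (k:ℝ))) ≤ Real.log (1 - ℓ * q ^ (c + (k:ℝ) + 1)) := by
      apply Real.log_le_log h2
      nlinarith
    linarith
  rw [hasSum_iff_tendsto_nat_of_nonneg hnonneg]
  have hsum : ∀ n : ℕ, (∑ k ∈ Finset.range n, (Real.log (1 - ℓ * q ^ (c + (k : ℝ) + 1))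
      - Real.log (1 - ℓ * q ^ (c + (k : ℝ))))) = g n - g 0 := by
    intro n
    rw [← Finset.sum_range_sub (fun k => g k) n]
    apply Finset.sum_congr rfl
    intro k _
    simp only [hg]
    push_cast
    ring_nf
  have hg0 : g 0 = Real.log (1 - ℓ * q ^ c) := by simp [hg]
  have hgt : Tendsto g atTop (𝓝 0) := by
    have h1 : Tendsto (fun n : ℕ => ℓ * q ^ c * q ^ n) atTop (𝓝 0) := by
      have := tendsto_pow_atTop_nhds_zero_of_lt_one hq0.le hq1
      simpa using this.const_mul (ℓ * q ^ c)
    have h2 : Tendsto (fun n : ℕ => 1 - ℓ * q ^ c * q ^ n) atTop (𝓝 1) := by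
      simpa using (tendsto_const_nhds (x := (1:ℝ))).sub h1
    have h3 : Tendsto (fun n : ℕ => Real.log (1 - ℓ * q ^ c * q ^ n)) atTop (𝓝 0) := by
      have := h2.log one_ne_zero
      simpa using this
    apply h3.congr
    intro n
    rw [hg]
    congr 2
    rw [Real.rpow_add hq0, Real.rpow_natCast]
    ring
  have h5 : Tendsto (fun n => g n - g 0) atTop (𝓝 (-Real.log (1 - ℓ * q ^ c))) := by
    have h6 := hgt.sub (tendsto_const_nhds (x := g 0))
    rw [zero_sub] at h6
    rw [← hg0]
    exact h6
  exact Tendsto.congr (fun n => (hsum n).symm) h5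

lemma key_bound {q ℓ : ℝ} (hq0 : 0 < q) (hq1 : q < 1) (hℓ0 : 0 < ℓ) (hℓ1 : ℓ < 1)
    {A B : ℝ} (hA : 0 < A) (hAB : A < B) (hA1 : ℓ * q ^ (A - 1) < 1) :
    (B - A) * Real.log (1 - ℓ * q ^ (A - 1)) ≤
      (∑' k : ℕ, Real.log (1 - ℓ * q ^ A * q ^ k))
        - (∑' k : ℕ, Real.log (1 - ℓ * q ^ B * q ^ k))
    ∧ (∑' k : ℕ, Real.log (1 - ℓ * q ^ A * q ^ k))
        - (∑' k : ℕ, Real.log (1 - ℓ * q ^ B * q ^ k))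
      ≤ (B - A) * Real.log (1 - ℓ * q ^ B) := by
  set h : ℝ → ℝ := fun t => Real.log (1 - ℓ * q ^ t) with hh
  have hβ : 0 < B - A := by linarith
  have hrw : ∀ (c : ℝ) (k : ℕ), ℓ * q ^ c * q ^ k = ℓ * q ^ (c + (k : ℝ)) := by
    intro c k
    rw [Real.rpow_add hq0, Real.rpow_natCast]
    ring
  have hAx : ℓ * q ^ A < 1 :=
    rpow_factor_lt_one hq0 hq1 hℓ0 hA1 (by linarith)
  have hBx : ℓ * q ^ B < 1 :=
    rpow_factor_lt_one hq0 hq1 hℓ0 hA1 (by linarith)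
  -- summability of the two log series, in shifted form
  have sA : Summable (fun k : ℕ => h (A + (k : ℝ))) := by
    refine (summable_log_factor hq0 hq1 (x := ℓ * q ^ A) (by positivity) hAx).congr ?_
    intro k; rw [hh]; simp only; rw [hrw]
  have sB : Summable (fun k : ℕ => h (B + (k : ℝ))) := by
    refine (summable_log_factor hq0 hq1 (x := ℓ * q ^ B) (by positivity) hBx).congr ?_
    intro k; rw [hh]; simp only; rw [hrw]
  -- telescoping sums
  have T1 := hasSum_tele hq0 hq1 hℓ0 hℓ1 B hBx
  have T2 := hasSum_tele hq0 hq1 hℓ0 hℓ1 (A - 1) hA1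
  -- the middle terms
  set m : ℕ → ℝ := fun k => h (B + (k : ℝ)) - h (A + (k : ℝ)) with hm
  set g₁ : ℕ → ℝ := fun k => h (B + (k : ℝ) + 1) - h (B + (k : ℝ)) with hg₁
  set g₂ : ℕ → ℝ := fun k => h (A - 1 + (k : ℝ) + 1) - h (A - 1 + (k : ℝ)) with hg₂
  have hcc := concave_logq hq0 hq1 hℓ0 (A - 1) hA1
  have hI : ∀ k : ℕ, (B - A) * g₁ k ≤ m k := by
    intro k
    have hs := hcc.slope_anti_adjacent (x := A + (k : ℝ)) (y := B + (k : ℝ))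
      (z := B + (k : ℝ) + 1)
      (by simp only [mem_Ici]; have : (0:ℝ) ≤ (k:ℝ) := Nat.cast_nonneg k; linarith)
      (by simp only [mem_Ici]; have : (0:ℝ) ≤ (k:ℝ) := Nat.cast_nonneg k; linarith)
      (by linarith) (by linarith)
    have e1 : B + (k : ℝ) + 1 - (B + (k : ℝ)) = 1 := by ring
    have e2 : B + (k : ℝ) - (A + (k : ℝ)) = B - A := by ring
    rw [e1, e2, div_one, le_div_iff₀ hβ] at hs
    simp only [hm, hg₁, hh] at *
    nlinarith
  have hII : ∀ k : ℕ, m k ≤ (B - A) * g₂ k := by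
    intro k
    have hs := hcc.slope_anti_adjacent (x := A - 1 + (k : ℝ)) (y := A + (k : ℝ))
      (z := B + (k : ℝ))
      (by simp only [mem_Ici]; have : (0:ℝ) ≤ (k:ℝ) := Nat.cast_nonneg k; linarith)
      (by simp only [mem_Ici]; have : (0:ℝ) ≤ (k:ℝ) := Nat.cast_nonneg k; linarith)
      (by linarith) (by linarith)
    have e1 : B + (k : ℝ) - (A + (k : ℝ)) = B - A := by ring
    have e2 : A + (k : ℝ) - (A - 1 + (k : ℝ)) = 1 := by ring
    have e3 : A - 1 + (k : ℝ) + 1 = A + (k : ℝ) := by ring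
    rw [e1, e2, div_one, div_le_iff₀ hβ] at hs
    simp only [hm, hg₂, hh] at *
    rw [e3]
    nlinarith
  have hmnn : ∀ k : ℕ, 0 ≤ m k := by
    intro k
    have h1 := hI k
    have h2 : 0 ≤ g₁ k := by
      simp only [hg₁, hh]
      have hq1' : q ^ (B + (k : ℝ) + 1) ≤ q ^ (B + (k : ℝ)) :=
        Real.rpow_le_rpow_of_exponent_ge hq0 hq1.le (by linarith)
      have hp : ℓ * q ^ (B + (k : ℝ)) < 1 :=
        rpow_factor_lt_one hq0 hq1 hℓ0 hA1 (by have : (0:ℝ) ≤ (k:ℝ) := Nat.cast_nonneg k; linarith)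
      have : Real.log (1 - ℓ * q ^ (B + (k:ℝ))) ≤ Real.log (1 - ℓ * q ^ (B + (k:ℝ) + 1)) := by
        apply Real.log_le_log (by linarith)
        nlinarith
      linarith
    nlinarith
  have smsum : Summable m := by
    refine Summable.of_nonneg_of_le hmnn (fun k => hII k) ?_
    exact (T2.summable.mul_left (B - A))
  have hsum_ge : (B - A) * (-h B) ≤ ∑' k, m k := by
    have := Summable.tsum_le_tsum hI (T1.summable.mul_left (B - A)) smsum
    rwa [(T1.mul_left (B - A)).tsum_eq] at this
  have hsum_le : (∑' k, m k) ≤ (B - A) * (-h (A - 1)) := by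
    have := Summable.tsum_le_tsum hII smsum (T2.summable.mul_left (B - A))
    rwa [(T2.mul_left (B - A)).tsum_eq] at this
  have hSdiff : (∑' k : ℕ, Real.log (1 - ℓ * q ^ A * q ^ k))
      - (∑' k : ℕ, Real.log (1 - ℓ * q ^ B * q ^ k)) = -∑' k, m k := by
    have eA : (∑' k : ℕ, Real.log (1 - ℓ * q ^ A * q ^ k)) = ∑' k : ℕ, h (A + (k : ℝ)) := by
      apply tsum_congr; intro k; rw [hh]; simp only; rw [hrw]
    have eB : (∑' k : ℕ, Real.log (1 - ℓ * q ^ B * q ^ k)) = ∑' k : ℕ, h (B + (k : ℝ)) := by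
      apply tsum_congr; intro k; rw [hh]; simp only; rw [hrw]
    rw [eA, eB, ← tsum_neg, ← Summable.tsum_sub sA sB]
    apply tsum_congr; intro k; simp only [hm]; ring
  constructor
  · rw [hSdiff]
    simp only [hh] at hsum_le ⊢
    nlinarith
  · rw [hSdiff]
    simp only [hh] at hsum_ge ⊢
    nlinarith

noncomputable def Eterm (q ℓ c : ℝ) : ℝ :=
  |Real.log (1 - ℓ * q ^ (c - 1)) - Real.log (1 - ℓ)|
    + |Real.log (1 - ℓ * q ^ c) - Real.log (1 - ℓ)|

lemma Eterm_nonneg (q ℓ c : ℝ) : 0 ≤ Eterm q ℓ c := by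
  unfold Eterm; positivity

lemma abs_key {q ℓ : ℝ} (hq0 : 0 < q) (hq1 : q < 1) (hℓ0 : 0 < ℓ) (hℓ1 : ℓ < 1)
    {A B : ℝ} (hA : 0 < A) (hB : 0 < B)
    (hA1 : ℓ * q ^ (A - 1) < 1) (hB1 : ℓ * q ^ (B - 1) < 1) :
    |(∑' k : ℕ, Real.log (1 - ℓ * q ^ A * q ^ k))
        - (∑' k : ℕ, Real.log (1 - ℓ * q ^ B * q ^ k))
        - (B - A) * Real.log (1 - ℓ)|
      ≤ |B - A| * (Eterm q ℓ A + Eterm q ℓ B) := by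
  have main : ∀ A' B' : ℝ, 0 < A' → A' < B' → ℓ * q ^ (A' - 1) < 1 →
      |(∑' k : ℕ, Real.log (1 - ℓ * q ^ A' * q ^ k))
        - (∑' k : ℕ, Real.log (1 - ℓ * q ^ B' * q ^ k))
        - (B' - A') * Real.log (1 - ℓ)|
      ≤ (B' - A') * (Eterm q ℓ A' + Eterm q ℓ B') := by
    intro A' B' hA' hAB' hA1'
    obtain ⟨h1, h2⟩ := key_bound hq0 hq1 hℓ0 hℓ1 hA' hAB' hA1'
    have hβ : 0 < B' - A' := by linarith
    have e1 : |Real.log (1 - ℓ * q ^ (A' - 1)) - Real.log (1 - ℓ)| ≤ Eterm q ℓ A' := by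
      unfold Eterm
      have := abs_nonneg (Real.log (1 - ℓ * q ^ A') - Real.log (1 - ℓ))
      linarith
    have e2 : |Real.log (1 - ℓ * q ^ B') - Real.log (1 - ℓ)| ≤ Eterm q ℓ B' := by
      unfold Eterm
      have := abs_nonneg (Real.log (1 - ℓ * q ^ (B' - 1)) - Real.log (1 - ℓ))
      linarith
    rw [abs_le]
    have hEA := Eterm_nonneg q ℓ A'
    have hEB := Eterm_nonneg q ℓ B'
    constructor
    · have l1 : -(|Real.log (1 - ℓ * q ^ (A' - 1)) - Real.log (1 - ℓ)|)
          ≤ Real.log (1 - ℓ * q ^ (A' - 1)) - Real.log (1 - ℓ) := neg_abs_le _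
      nlinarith [abs_nonneg (Real.log (1 - ℓ * q ^ (A' - 1)) - Real.log (1 - ℓ))]
    · have l2 : Real.log (1 - ℓ * q ^ B') - Real.log (1 - ℓ)
          ≤ |Real.log (1 - ℓ * q ^ B') - Real.log (1 - ℓ)| := le_abs_self _
      nlinarith [abs_nonneg (Real.log (1 - ℓ * q ^ B') - Real.log (1 - ℓ))]
  rcases lt_trichotomy A B with hlt | heq | hgt
  · have := main A B hA hlt hA1
    rwa [abs_of_pos (by linarith : (0:ℝ) < B - A)]
  · subst heq
    simp only [sub_self, zero_mul, sub_zero, abs_zero]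
    positivity
  · have := main B A hB hgt hB1
    rw [abs_of_neg (by linarith : B - A < 0)]
    calc |(∑' k : ℕ, Real.log (1 - ℓ * q ^ A * q ^ k))
        - (∑' k : ℕ, Real.log (1 - ℓ * q ^ B * q ^ k))
        - (B - A) * Real.log (1 - ℓ)|
        = |(∑' k : ℕ, Real.log (1 - ℓ * q ^ B * q ^ k))
        - (∑' k : ℕ, Real.log (1 - ℓ * q ^ A * q ^ k))
        - (A - B) * Real.log (1 - ℓ)| := by
          rw [← abs_neg]
          congr 1
          ring
      _ ≤ (A - B) * (Eterm q ℓ B + Eterm q ℓ A) := this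
      _ = -(B - A) * (Eterm q ℓ A + Eterm q ℓ B) := by ring

/-- As `q → 1⁻`, `(ℓ q^A;q)_∞ / (ℓ q^B;q)_∞ → (1-ℓ)^{B-A}`, uniformly for `ℓ`
in any compact subset of `(0,1)`. -/
theorem qPochInf_ratio_tendsto (A B : ℝ) (hA : 0 < A) (hB : 0 < B)
    (K : Set ℝ) (hK : K ⊆ Set.Ioo (0 : ℝ) 1) (hKc : IsCompact K) :
    TendstoUniformlyOn
      (fun (q : ℝ) (ℓ : ℝ) => qPochInf (ℓ * q ^ A) q / qPochInf (ℓ * q ^ B) q)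
      (fun ℓ : ℝ => (1 - ℓ) ^ (B - A))
      (nhdsWithin 1 (Set.Ioo (0 : ℝ) 1)) K := by
  rcases K.eq_empty_or_nonempty with rfl | hne
  · exact tendstoUniformlyOn_empty
  obtain ⟨M, hMK, hMub⟩ := hKc.exists_isGreatest hne
  obtain ⟨hM0, hM1⟩ := hK hMK
  set q₀ : ℝ := (1 + M) / 2 with hq₀def
  have hq₀M : M < q₀ := by rw [hq₀def]; linarith
  have hq₀0 : 0 < q₀ := by rw [hq₀def]; linarith
  have hq₀1 : q₀ < 1 := by rw [hq₀def]; linarith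
  have hMq₀ : M / q₀ < 1 := (div_lt_one hq₀0).mpr hq₀M
  set δ₀ : ℝ := min (1 - M) (1 - M / q₀) with hδ₀def
  have hδ₀ : 0 < δ₀ := lt_min (by linarith) (by linarith)
  set C₁ : ℝ := |B - A| * (-Real.log (1 - M)) with hC₁def
  have hC₁ : 0 ≤ C₁ := by
    apply mul_nonneg (abs_nonneg _)
    have := Real.log_nonpos (by linarith : (0:ℝ) ≤ 1 - M) (by linarith)
    linarith
  set C₀ : ℝ := Real.exp C₁ with hC₀def
  have hC₀pos : 0 < C₀ := Real.exp_pos _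
  rw [Metric.tendstoUniformlyOn_iff]
  intro ε hε
  set η : ℝ := min 1 (ε / (2 * C₀ + 1)) with hηdef
  have hη0 : 0 < η := lt_min one_pos (by positivity)
  have hη1 : η ≤ 1 := min_le_left _ _
  have hηε : 2 * C₀ * η < ε := by
    have h1 : η ≤ ε / (2 * C₀ + 1) := min_le_right _ _
    have h2 : 2 * C₀ * η ≤ 2 * C₀ * (ε / (2 * C₀ + 1)) := by nlinarith
    have h3 : 2 * C₀ * (ε / (2 * C₀ + 1)) < ε := by
      rw [mul_div_assoc']
      rw [div_lt_iff₀ (by positivity)]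
      nlinarith
    linarith
  -- the uniform error bound Φ
  set Φ : ℝ → ℝ := fun q => |B - A| *
      ((|q ^ (A - 1) - 1| + |q ^ A - 1| + (|q ^ (B - 1) - 1| + |q ^ B - 1|)) / δ₀) with hΦdef
  have hΦtendsto : Tendsto Φ (𝓝 1) (𝓝 0) := by
    have ct : ∀ c : ℝ, Tendsto (fun q : ℝ => |q ^ c - 1|) (𝓝 1) (𝓝 0) := by
      intro c
      have h1 : ContinuousAt (fun q : ℝ => q ^ c) 1 :=
        Real.continuousAt_rpow_const 1 c (Or.inl one_ne_zero)
      have h2 : Tendsto (fun q : ℝ => q ^ c) (𝓝 1) (𝓝 1) := by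
        have := h1.tendsto
        rwa [Real.one_rpow] at this
      have h3 := (h2.sub (tendsto_const_nhds (x := (1:ℝ)))).abs
      simpa using h3
    have h4 := (((ct (A-1)).add (ct A)).add ((ct (B-1)).add (ct B))).div_const δ₀
    have h5 := h4.const_mul |B - A|
    simpa using h5
  have hev1 : ∀ᶠ q in 𝓝[Set.Ioo (0:ℝ) 1] 1, q₀ < q :=
    (eventually_gt_nhds hq₀1).filter_mono nhdsWithin_le_nhds
  have hev2 : ∀ᶠ q in 𝓝[Set.Ioo (0:ℝ) 1] 1, q ∈ Set.Ioo (0:ℝ) 1 :=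
    eventually_mem_nhdsWithin
  have hev3 : ∀ᶠ q in 𝓝[Set.Ioo (0:ℝ) 1] 1, Φ q < η := by
    have hm : Tendsto Φ (𝓝[Set.Ioo (0:ℝ) 1] 1) (𝓝 0) :=
      hΦtendsto.mono_left nhdsWithin_le_nhds
    exact hm.eventually_lt_const hη0
  filter_upwards [hev1, hev2, hev3] with q hqq₀ hqIoo hΦq
  intro ℓ hℓK
  obtain ⟨hℓ0, hℓ1⟩ := hK hℓK
  have hℓM : ℓ ≤ M := hMub hℓK
  obtain ⟨hq0, hq1⟩ := hqIoo
  -- rpow facts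
  have hqe : ∀ e : ℝ, -1 ≤ e → ℓ * q ^ e ≤ M / q₀ := by
    intro e he
    have h1 : q ^ e ≤ q ^ (-1 : ℝ) :=
      Real.rpow_le_rpow_of_exponent_ge hq0 hq1.le he
    have h2 : q ^ (-1:ℝ) = q⁻¹ := Real.rpow_neg_one q
    have h3 : q⁻¹ ≤ q₀⁻¹ := by
      apply inv_anti₀ hq₀0 hqq₀.le
    have h4 : q ^ e ≤ q₀⁻¹ := by rw [h2] at h1; linarith
    calc ℓ * q ^ e ≤ M * q₀⁻¹ := by
          apply mul_le_mul hℓM h4 (Real.rpow_pos_of_pos hq0 e).le hM0.le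
      _ = M / q₀ := by rw [div_eq_mul_inv]
  have hfloor : ∀ e : ℝ, -1 ≤ e → δ₀ ≤ 1 - ℓ * q ^ e := by
    intro e he
    have := hqe e he
    have h5 : δ₀ ≤ 1 - M / q₀ := min_le_right _ _
    linarith
  have hδℓ : δ₀ ≤ 1 - ℓ := by
    have h5 : δ₀ ≤ 1 - M := min_le_left _ _
    linarith
  have hA1 : ℓ * q ^ (A - 1) < 1 := lt_of_le_of_lt (hqe (A-1) (by linarith)) hMq₀
  have hB1 : ℓ * q ^ (B - 1) < 1 := lt_of_le_of_lt (hqe (B-1) (by linarith)) hMq₀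
  have hAx : ℓ * q ^ A < 1 := lt_of_le_of_lt (hqe A (by linarith)) hMq₀
  have hBx : ℓ * q ^ B < 1 := lt_of_le_of_lt (hqe B (by linarith)) hMq₀
  -- Eterm bounds
  have hE : ∀ c : ℝ, 0 < c →
      Eterm q ℓ c ≤ (|q ^ (c - 1) - 1| + |q ^ c - 1|) / δ₀ := by
    intro c hc
    have part : ∀ e : ℝ, -1 ≤ e →
        |Real.log (1 - ℓ * q ^ e) - Real.log (1 - ℓ)| ≤ |q ^ e - 1| / δ₀ := by
      intro e he
      have hfe := hfloor e he
      have h1 : 0 < 1 - ℓ * q ^ e := lt_of_lt_of_le hδ₀ hfe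
      have h2 : 0 < 1 - ℓ := by linarith
      have h3 := abs_log_sub_log_le h1 h2
      have h4 : δ₀ ≤ min (1 - ℓ * q ^ e) (1 - ℓ) := le_min hfe hδℓ
      have h5 : |1 - ℓ * q ^ e - (1 - ℓ)| = ℓ * |q ^ e - 1| := by
        rw [show (1 - ℓ * q ^ e - (1 - ℓ)) = -(ℓ * (q ^ e - 1)) by ring, abs_neg, abs_mul,
          abs_of_pos hℓ0]
      have h6 : |1 - ℓ * q ^ e - (1 - ℓ)| ≤ |q ^ e - 1| := by
        rw [h5]
        nlinarith [abs_nonneg (q ^ e - 1)]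
      calc |Real.log (1 - ℓ * q ^ e) - Real.log (1 - ℓ)|
          ≤ |1 - ℓ * q ^ e - (1 - ℓ)| / min (1 - ℓ * q ^ e) (1 - ℓ) := h3
        _ ≤ |1 - ℓ * q ^ e - (1 - ℓ)| / δ₀ :=
            div_le_div_of_nonneg_left (abs_nonneg _) hδ₀ h4
        _ ≤ |q ^ e - 1| / δ₀ := by
            apply div_le_div_of_nonneg_right h6 hδ₀.le
    have p1 := part (c - 1) (by linarith)
    have p2 := part c (by linarith)
    unfold Eterm
    rw [add_div]
    linarith
  -- main bound
  have habs := abs_key hq0 hq1 hℓ0 hℓ1 hA hB hA1 hB1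
  set SA := ∑' k : ℕ, Real.log (1 - ℓ * q ^ A * q ^ k) with hSA
  set SB := ∑' k : ℕ, Real.log (1 - ℓ * q ^ B * q ^ k) with hSB
  set T := (B - A) * Real.log (1 - ℓ) with hT
  have hDT : |SA - SB - T| < η := by
    have h1 : |B - A| * (Eterm q ℓ A + Eterm q ℓ B) ≤ Φ q := by
      rw [hΦdef]
      apply mul_le_mul_of_nonneg_left ?_ (abs_nonneg _)
      have e1 := hE A hA
      have e2 := hE B hB
      rw [add_div]
      linarith
    calc |SA - SB - T| ≤ |B - A| * (Eterm q ℓ A + Eterm q ℓ B) := habs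
      _ ≤ Φ q := h1
      _ < η := hΦq
  -- rewrite the functions
  have hFA : qPochInf (ℓ * q ^ A) q = Real.exp SA := by
    rw [qPochInf, hSA]
    exact qPochInf_eq_exp hq0 hq1 (by positivity) hAx
  have hFB : qPochInf (ℓ * q ^ B) q = Real.exp SB := by
    rw [qPochInf, hSB]
    exact qPochInf_eq_exp hq0 hq1 (by positivity) hBx
  have hTgt : (1 - ℓ) ^ (B - A) = Real.exp T := by
    rw [Real.rpow_def_of_pos (by linarith : (0:ℝ) < 1 - ℓ), hT, mul_comm]
  have hF : qPochInf (ℓ * q ^ A) q / qPochInf (ℓ * q ^ B) q = Real.exp (SA - SB) := by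
    rw [hFA, hFB, Real.exp_sub]
  rw [hF, hTgt, Real.dist_eq]
  have hexpT : Real.exp T ≤ C₀ := by
    rw [hC₀def]
    apply Real.exp_le_exp.mpr
    have h1 : Real.log (1 - M) ≤ Real.log (1 - ℓ) :=
      Real.log_le_log (by linarith) (by linarith)
    have h2 : Real.log (1 - ℓ) ≤ 0 := Real.log_nonpos (by linarith) (by linarith)
    calc T ≤ |B - A| * (-Real.log (1 - ℓ)) := by
          rw [hT]
          have h3 := mul_le_mul_of_nonneg_right (neg_le_abs (B - A))
            (by linarith : (0:ℝ) ≤ -Real.log (1 - ℓ))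
          nlinarith
      _ ≤ C₁ := by
          rw [hC₁def]
          have h4 := mul_le_mul_of_nonneg_left
            (by linarith : -Real.log (1 - ℓ) ≤ -Real.log (1 - M)) (abs_nonneg (B - A))
          linarith
  have hsplit : Real.exp (SA - SB) = Real.exp T * Real.exp (SA - SB - T) := by
    rw [← Real.exp_add]; ring_nf
  rw [hsplit]
  have h7 : |Real.exp T - Real.exp T * Real.exp (SA - SB - T)|
      = Real.exp T * |Real.exp (SA - SB - T) - 1| := by
    have hre : Real.exp T - Real.exp T * Real.exp (SA - SB - T)
        = Real.exp T * (1 - Real.exp (SA - SB - T)) := by ring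
    rw [hre, abs_mul, abs_of_pos (Real.exp_pos T), abs_sub_comm]
  rw [h7]
  have h8 : |Real.exp (SA - SB - T) - 1| ≤ 2 * |SA - SB - T| :=
    Real.abs_exp_sub_one_le (by linarith)
  calc Real.exp T * |Real.exp (SA - SB - T) - 1| ≤ C₀ * (2 * |SA - SB - T|) := by
        apply mul_le_mul hexpT h8 (abs_nonneg _) hC₀pos.le
    _ < C₀ * (2 * η) := by
        apply mul_lt_mul_of_pos_left ?_ hC₀pos
        linarith
    _ = 2 * C₀ * η := by ring
    _ < ε := hηε
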